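/- For any full row-rank matrix T ∈ ℝ^{m×n} and any symmetric positive definite matrix D ∈ ℝ^{n×n}, the condition number satisfies κ(T D Tᵀ) ≤ κ(D)·κ(T Tᵀ). -/

import Mathlib

open Matrix

section aux

private lemma dot_trans {m n : ℕ} (M : Matrix (Fin m) (Fin n) ℝ) (x : Fin m → ℝ)
    (z : Fin n → ℝ) : x ⬝ᵥ (M *ᵥ z) = (Mᵀ *ᵥ x) ⬝ᵥ z := by
  rw [dotProduct_mulVec, mulVec_transpose]

variable {k : ℕ} [NeZero k] {A : Matrix (Fin k) (Fin k) ℝ}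

private lemma star_U_eq (hA : A.IsHermitian) :
    star (hA.eigenvectorUnitary : Matrix (Fin k) (Fin k) ℝ)
      = (hA.eigenvectorUnitary : Matrix (Fin k) (Fin k) ℝ)ᵀ := by
  rw [Matrix.star_eq_conjTranspose, conjTranspose_eq_transpose_of_trivial]

private lemma repr_main (hA : A.IsHermitian) (x : Fin k → ℝ) :
    x ⬝ᵥ (A *ᵥ x)
      = ∑ i, hA.eigenvalues i *
          (((hA.eigenvectorUnitary : Matrix (Fin k) (Fin k) ℝ)ᵀ *ᵥ x) i) ^ 2 := by
  set U := (hA.eigenvectorUnitary : Matrix (Fin k) (Fin k) ℝ) with hU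
  conv_lhs => rw [hA.spectral_theorem, Unitary.conjStarAlgAut_apply]
  rw [star_U_eq hA, ← mulVec_mulVec, ← mulVec_mulVec, dot_trans]
  simp only [dotProduct, mulVec_diagonal, Function.comp]
  refine Finset.sum_congr rfl fun i _ => ?_
  simp [RCLike.ofReal_real_eq_id]
  ring

private lemma repr_sq (hA : A.IsHermitian) (x : Fin k → ℝ) :
    x ⬝ᵥ x
      = ∑ i, (((hA.eigenvectorUnitary : Matrix (Fin k) (Fin k) ℝ)ᵀ *ᵥ x) i) ^ 2 := by
  set U := (hA.eigenvectorUnitary : Matrix (Fin k) (Fin k) ℝ) with hU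
  have hUUt : U * Uᵀ = 1 := by
    rw [← star_U_eq hA]
    exact Matrix.mem_unitaryGroup_iff.mp hA.eigenvectorUnitary.2
  have h : (Uᵀ *ᵥ x) ⬝ᵥ (Uᵀ *ᵥ x) = x ⬝ᵥ x := by
    rw [dot_trans, transpose_transpose, mulVec_mulVec, hUUt, one_mulVec]
  rw [← h]
  simp [dotProduct, sq]

private lemma rayleigh_le (hA : A.IsHermitian) (x : Fin k → ℝ) :
    x ⬝ᵥ (A *ᵥ x) ≤ (⨆ i, hA.eigenvalues i) * (x ⬝ᵥ x) := by
  rw [repr_main hA x, repr_sq hA x, Finset.mul_sum]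
  refine Finset.sum_le_sum fun i _ => ?_
  exact mul_le_mul_of_nonneg_right (le_ciSup (Set.finite_range _).bddAbove i) (sq_nonneg _)

private lemma rayleigh_ge (hA : A.IsHermitian) (x : Fin k → ℝ) :
    (⨅ i, hA.eigenvalues i) * (x ⬝ᵥ x) ≤ x ⬝ᵥ (A *ᵥ x) := by
  rw [repr_main hA x, repr_sq hA x, Finset.mul_sum]
  refine Finset.sum_le_sum fun i _ => ?_
  exact mul_le_mul_of_nonneg_right (ciInf_le (Set.finite_range _).bddBelow i) (sq_nonneg _)

private lemma eig_dot (hA : A.IsHermitian) (i : Fin k) :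
    hA.eigenvalues i
      = (⇑(hA.eigenvectorBasis i) : Fin k → ℝ) ⬝ᵥ (A *ᵥ ⇑(hA.eigenvectorBasis i)) := by
  simpa using hA.eigenvalues_eq i

private lemma eig_unit (hA : A.IsHermitian) (i : Fin k) :
    (⇑(hA.eigenvectorBasis i) : Fin k → ℝ) ⬝ᵥ ⇑(hA.eigenvectorBasis i) = 1 := by
  have h : (inner ℝ (hA.eigenvectorBasis i) (hA.eigenvectorBasis i) : ℝ) = 1 := by
    rw [real_inner_self_eq_norm_sq, hA.eigenvectorBasis.orthonormal.1 i]
    norm_num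
  rw [EuclideanSpace.inner_eq_star_dotProduct] at h
  simpa using h

end aux

/-- The condition number of a symmetric matrix: the ratio of its largest to smallest
eigenvalue. -/
noncomputable def condNumber {k : ℕ} {M : Matrix (Fin k) (Fin k) ℝ}
    (hM : M.IsHermitian) : ℝ :=
  (⨆ i, hM.eigenvalues i) / (⨅ i, hM.eigenvalues i)

/-- For any full row-rank matrix `T ∈ ℝ^{m×n}` and any symmetric
positive definite `D ∈ ℝ^{n×n}`, the condition numbers satisfy
`κ(T D Tᵀ) ≤ κ(D) * κ(T Tᵀ)`. -/
theorem condNumber_conjugation_bound {m n : ℕ} [NeZero m] [NeZero n]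
    (T : Matrix (Fin m) (Fin n) ℝ) (hT : T.rank = m)
    (D : Matrix (Fin n) (Fin n) ℝ) (hD : D.PosDef)
    (h1 : (T * D * Tᵀ).IsHermitian) (h2 : (T * Tᵀ).IsHermitian) :
    condNumber h1 ≤ condNumber hD.1 * condNumber h2 := by
  -- injectivity of `Tᵀ *ᵥ ·`
  have hrt : Tᵀ.rank = m := by rw [Matrix.rank_transpose]; exact hT
  have hker : LinearMap.ker (Tᵀ.mulVecLin) = ⊥ := by
    have hfr := LinearMap.finrank_range_add_finrank_ker (Tᵀ.mulVecLin)
    rw [Module.finrank_fin_fun] at hfr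
    unfold Matrix.rank at hrt
    rw [hrt] at hfr
    have h0 : Module.finrank ℝ (LinearMap.ker (Tᵀ.mulVecLin)) = 0 := by omega
    exact Submodule.finrank_eq_zero.mp h0
  have hTinj : ∀ v : Fin m → ℝ, Tᵀ *ᵥ v = 0 → v = 0 := by
    intro v hv
    rw [mulVec_transpose] at hv
    have hmem : v ∈ LinearMap.ker (Tᵀ.mulVecLin) := by
      simpa [LinearMap.mem_ker, mulVecLin_apply] using hv
    rw [hker] at hmem
    simpa using hmem
  -- `T * Tᵀ` is positive definite
  have hTT : (T * Tᵀ).PosDef := by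
    refine PosDef.of_dotProduct_mulVec_pos h2 fun x hx => ?_
    rw [star_trivial, ← mulVec_mulVec, dot_trans]
    have hne : Tᵀ *ᵥ x ≠ 0 := fun h => hx (hTinj x h)
    have := (dotProduct_self_star_pos_iff (v := Tᵀ *ᵥ x)).mpr hne
    simpa [star_trivial] using this
  set a1 := ⨆ i, h1.eigenvalues i with ha1
  set b1 := ⨅ i, h1.eigenvalues i with hb1
  set aD := ⨆ i, hD.1.eigenvalues i with haD
  set bD := ⨅ i, hD.1.eigenvalues i with hbD
  set a2 := ⨆ i, h2.eigenvalues i with ha2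
  set b2 := ⨅ i, h2.eigenvalues i with hb2
  have hbD_pos : 0 < bD := by
    obtain ⟨i0, hi0⟩ := exists_eq_ciInf_of_finite (f := hD.1.eigenvalues)
    rw [hbD, ← hi0]; exact hD.eigenvalues_pos i0
  have hb2_pos : 0 < b2 := by
    obtain ⟨i0, hi0⟩ := exists_eq_ciInf_of_finite (f := h2.eigenvalues)
    rw [hb2, ← hi0]; exact hTT.eigenvalues_pos i0
  have haD_pos : 0 < aD :=
    lt_of_lt_of_le (hD.eigenvalues_pos (Classical.arbitrary _))
      (le_ciSup (Set.finite_range _).bddAbove _)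
  have ha2_pos : 0 < a2 :=
    lt_of_lt_of_le (hTT.eigenvalues_pos (Classical.arbitrary _))
      (le_ciSup (Set.finite_range _).bddAbove _)
  have key_up : ∀ i, h1.eigenvalues i ≤ aD * a2 := by
    intro i
    set v : Fin m → ℝ := ⇑(h1.eigenvectorBasis i) with hv
    have e1 : v ⬝ᵥ ((T * D * Tᵀ) *ᵥ v) = (Tᵀ *ᵥ v) ⬝ᵥ (D *ᵥ (Tᵀ *ᵥ v)) := by
      rw [← mulVec_mulVec, ← mulVec_mulVec, dot_trans]
    have e2 : (Tᵀ *ᵥ v) ⬝ᵥ (Tᵀ *ᵥ v) = v ⬝ᵥ ((T * Tᵀ) *ᵥ v) := by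
      rw [← mulVec_mulVec, dot_trans T v (Tᵀ *ᵥ v)]
    calc h1.eigenvalues i = (Tᵀ *ᵥ v) ⬝ᵥ (D *ᵥ (Tᵀ *ᵥ v)) := by
          rw [eig_dot h1 i, e1]
      _ ≤ aD * ((Tᵀ *ᵥ v) ⬝ᵥ (Tᵀ *ᵥ v)) := rayleigh_le hD.1 _
      _ = aD * (v ⬝ᵥ ((T * Tᵀ) *ᵥ v)) := by rw [e2]
      _ ≤ aD * (a2 * (v ⬝ᵥ v)) :=
          mul_le_mul_of_nonneg_left (rayleigh_le h2 v) haD_pos.le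
      _ = aD * a2 := by rw [eig_unit h1 i]; ring
  have key_dn : ∀ i, bD * b2 ≤ h1.eigenvalues i := by
    intro i
    set v : Fin m → ℝ := ⇑(h1.eigenvectorBasis i) with hv
    have e1 : v ⬝ᵥ ((T * D * Tᵀ) *ᵥ v) = (Tᵀ *ᵥ v) ⬝ᵥ (D *ᵥ (Tᵀ *ᵥ v)) := by
      rw [← mulVec_mulVec, ← mulVec_mulVec, dot_trans]
    have e2 : (Tᵀ *ᵥ v) ⬝ᵥ (Tᵀ *ᵥ v) = v ⬝ᵥ ((T * Tᵀ) *ᵥ v) := by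
      rw [← mulVec_mulVec, dot_trans T v (Tᵀ *ᵥ v)]
    calc bD * b2 = bD * (b2 * (v ⬝ᵥ v)) := by rw [eig_unit h1 i]; ring
      _ ≤ bD * (v ⬝ᵥ ((T * Tᵀ) *ᵥ v)) :=
          mul_le_mul_of_nonneg_left (rayleigh_ge h2 v) hbD_pos.le
      _ = bD * ((Tᵀ *ᵥ v) ⬝ᵥ (Tᵀ *ᵥ v)) := by rw [e2]
      _ ≤ (Tᵀ *ᵥ v) ⬝ᵥ (D *ᵥ (Tᵀ *ᵥ v)) := rayleigh_ge hD.1 _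
      _ = h1.eigenvalues i := by rw [eig_dot h1 i, e1]
  have hup : a1 ≤ aD * a2 := ciSup_le key_up
  have hdn : bD * b2 ≤ b1 := le_ciInf key_dn
  have hfinal : a1 / b1 ≤ (aD * a2) / (bD * b2) :=
    div_le_div₀ (mul_pos haD_pos ha2_pos).le hup (mul_pos hbD_pos hb2_pos) hdn
  calc condNumber h1 = a1 / b1 := rfl
    _ ≤ (aD * a2) / (bD * b2) := hfinal
    _ = (aD / bD) * (a2 / b2) := by rw [div_mul_div_comm]
    _ = condNumber hD.1 * condNumber h2 := rfl
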